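/- Let g, ĝ, (h_i)_{i∈ψ} and (ĥ_i)_{i∈φ} all be mutually independent random variables, each exponentially distributed with rate 1, where ψ is a nonempty finite index set and φ ⊆ ψ is nonempty. Fix r>0, α≥2 and distances d_i>0, and set η = g r^{-α}/Σ_{i∈ψ} h_i d_i^{-α} and η̂ = ĝ r^{-α}/Σ_{i∈φ} ĥ_i d_i^{-α}. Then for all T ≥ 0 and S_th ≥ 0, the FFR normalized average rate R_f = E[ln(1+η)·1_{η>T}·1_{η>S_th}] + (1/3)·E[ln(1+η̂)·1_{η̂>T}·1_{η≤S_th}] satisfies R_f = ∫_0^∞ [ ∏_{j∈ψ} (1 + max(e^t−1, T, S_th) r^α d_j^{-α})^{-1} + (1/3)·(1 − ∏_{j∈ψ}(1 + S_th r^α d_j^{-α})^{-1}) · ∏_{i∈φ} (1 + max(e^t−1, T) r^α d_i^{-α})^{-1} ] dt. -/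

import Mathlib

open MeasureTheory ProbabilityTheory Real Set
open scoped ENNReal

namespace FFRaux

lemma expMeasure_Iic_zero : expMeasure 1 (Set.Iic 0) = 0 := by
  rw [expMeasure, gammaMeasure, withDensity_apply _ measurableSet_Iic]
  have h : Set.Iic (0:ℝ) =ᵐ[volume] Set.Iio (0:ℝ) := Iio_ae_eq_Iic.symm
  rw [setLIntegral_congr h]
  exact lintegral_gammaPDF_of_nonpos le_rfl

lemma expMeasure_Ioi {y : ℝ} (hy : 0 ≤ y) :
    expMeasure 1 (Set.Ioi y) = ENNReal.ofReal (Real.exp (-y)) := by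
  rw [expMeasure, gammaMeasure, withDensity_apply _ measurableSet_Ioi]
  have h1 : ∀ x ∈ Set.Ioi y, gammaPDF 1 1 x = ENNReal.ofReal (Real.exp (-x)) := by
    intro x hx
    rw [gammaPDF_eq, if_pos (le_of_lt (lt_of_le_of_lt hy hx))]
    simp [Real.Gamma_one]
  rw [setLIntegral_congr_fun measurableSet_Ioi h1]
  rw [← ofReal_integral_eq_lintegral_ofReal]
  · rw [integral_exp_neg_Ioi]
  · exact (by simpa using exp_neg_integrableOn_Ioi y one_pos : IntegrableOn (fun x => Real.exp (-x)) (Set.Ioi y))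
  · exact Filter.Eventually.of_forall fun x => (Real.exp_pos _).le

lemma integral_exp_neg_mul_Ioi {b : ℝ} (hb : 0 < b) :
    ∫ x in Set.Ioi (0:ℝ), Real.exp (-(b * x)) = b⁻¹ := by
  have h := integral_comp_mul_left_Ioi (fun x => Real.exp (-x)) 0 hb
  simp only [mul_zero, smul_eq_mul] at h
  rw [h, integral_exp_neg_Ioi]
  simp

variable {Ω : Type*} [MeasurableSpace Ω] {μ : Measure Ω}

lemma ae_pos_of_expMap {X : Ω → ℝ} (hX : Measurable X)
    (hexp : μ.map X = expMeasure 1) : ∀ᵐ ω ∂μ, 0 < X ω := by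
  have h : μ {ω | ¬ (0 < X ω)} = 0 := by
    have : {ω | ¬ (0 < X ω)} = X ⁻¹' (Set.Iic 0) := by
      ext ω; simp [not_lt]
    rw [this, ← Measure.map_apply hX measurableSet_Iic, hexp, expMeasure_Iic_zero]
  exact h

set_option maxHeartbeats 1000000 in
lemma lintegral_ofReal_exp_neg_mul {X : Ω → ℝ} (hX : Measurable X)
    (hexp : μ.map X = expMeasure 1) {b : ℝ} (hb : 0 ≤ b) :
    ∫⁻ ω, ENNReal.ofReal (Real.exp (-(b * X ω))) ∂μ = ENNReal.ofReal ((1 + b)⁻¹) := by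
  have hmeas : Measurable fun x : ℝ => ENNReal.ofReal (Real.exp (-(b * x))) := by fun_prop
  calc ∫⁻ ω, ENNReal.ofReal (Real.exp (-(b * X ω))) ∂μ
      = ∫⁻ x, ENNReal.ofReal (Real.exp (-(b * x))) ∂(μ.map X) := (lintegral_map hmeas hX).symm
    _ = ∫⁻ x, ENNReal.ofReal (Real.exp (-(b * x))) ∂(expMeasure 1) := by rw [hexp]
    _ = ENNReal.ofReal ((1 + b)⁻¹) := by
        rw [expMeasure, gammaMeasure, lintegral_withDensity_eq_lintegral_mul _
          (show Measurable (gammaPDF 1 1) from (measurable_gammaPDFReal 1 1).ennreal_ofReal) hmeas]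
        have h1 : ∀ x : ℝ, gammaPDF 1 1 x * ENNReal.ofReal (Real.exp (-(b * x)))
            = Set.indicator (Set.Ici (0:ℝ))
                (fun x => ENNReal.ofReal (Real.exp (-((1 + b) * x)))) x := by
          intro x
          rw [gammaPDF_eq]
          by_cases hx : 0 ≤ x
          · rw [if_pos hx, Set.indicator_of_mem (Set.mem_Ici.2 hx), ← ENNReal.ofReal_mul (by positivity)]
            congr 1
            simp [Real.Gamma_one, ← Real.exp_add]
            ring_nf
          · rw [if_neg hx, Set.indicator_of_notMem (by simpa using hx)]
            simp
        simp_rw [Pi.mul_apply, h1]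
        rw [lintegral_indicator measurableSet_Ici _]
        have h2 : Set.Ici (0:ℝ) =ᵐ[volume] Set.Ioi (0:ℝ) := Ioi_ae_eq_Ici.symm
        rw [setLIntegral_congr h2, ← ofReal_integral_eq_lintegral_ofReal]
        · rw [integral_exp_neg_mul_Ioi (by linarith : (0:ℝ) < 1 + b)]
        · have := exp_neg_integrableOn_Ioi (b := 1 + b) 0 (by linarith)
          refine this.congr_fun (fun x _ => ?_) measurableSet_Ioi
          ring_nf
        · exact Filter.Eventually.of_forall fun x => (Real.exp_pos _).le


lemma lintegral_finset_prod_of_iIndepFun [IsProbabilityMeasure μ] {κ : Type*}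
    {G : κ → Ω → ℝ≥0∞} (hG : ∀ i, Measurable (G i))
    (hind : iIndepFun G μ) (s : Finset κ) :
    ∫⁻ ω, ∏ i ∈ s, G i ω ∂μ = ∏ i ∈ s, ∫⁻ ω, G i ω ∂μ := by
  classical
  induction s using Finset.induction_on with
  | empty => simp
  | @insert a s ha ih =>
    rw [Finset.prod_insert ha]
    simp_rw [Finset.prod_insert ha]
    have hindep : IndepFun (G a) (∏ i ∈ s, G i) μ :=
      (hind.indepFun_finsetProd_of_notMem hG ha).symm
    have hprodmeas : Measurable (∏ i ∈ s, G i) := by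
      have := Finset.measurable_prod s fun i (_ : i ∈ s) => hG i
      rw [Finset.prod_fn]; exact this
    have := lintegral_mul_eq_lintegral_mul_lintegral_of_indepFun (hG a) hprodmeas hindep
    have heq : ∀ ω, G a ω * ∏ i ∈ s, G i ω = (G a * ∏ i ∈ s, G i) ω := by
      intro ω; simp [Finset.prod_apply]
    simp_rw [heq]
    rw [this, ← ih]
    congr 1
    apply lintegral_congr
    intro ω; simp [Finset.prod_apply]

lemma tail_prob [IsProbabilityMeasure μ] {κ : Type*}
    {F : κ → Ω → ℝ} (hF : ∀ i, Measurable (F i))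
    (hind : iIndepFun F μ)
    (k0 : κ) (s : Finset κ) (hk0 : k0 ∉ s)
    (hX : μ.map (F k0) = expMeasure 1)
    (hY : ∀ i ∈ s, μ.map (F i) = expMeasure 1)
    {w : κ → ℝ} (hw : ∀ i ∈ s, 0 < w i) (hs : s.Nonempty)
    {c : ℝ} (hc : 0 ≤ c) :
    μ {ω | c < F k0 ω / ∑ i ∈ s, F i ω * w i}
      = ∏ i ∈ s, ENNReal.ofReal ((1 + c * w i)⁻¹) := by
  classical
  haveI : IsProbabilityMeasure (expMeasure 1) := isProbabilityMeasure_expMeasure one_pos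
  set S : Ω → ℝ := fun ω => ∑ i ∈ s, F i ω * w i with hSdef
  have hSmeas : Measurable S := Finset.measurable_sum s fun i _ => (hF i).mul_const _
  have hSpos : ∀ᵐ ω ∂μ, 0 < S ω := by
    have h1 : ∀ᵐ ω ∂μ, ∀ i ∈ s, 0 < F i ω :=
      (MeasureTheory.ae_ball_iff s.countable_toSet).2 fun i hi =>
        ae_pos_of_expMap (hF i) (hY i hi)
    filter_upwards [h1] with ω hω
    exact Finset.sum_pos (fun i hi => mul_pos (hω i hi) (hw i hi)) hs
  have hev : {ω | c < F k0 ω / S ω} =ᵐ[μ] {ω | c * S ω < F k0 ω} := by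
    rw [Filter.eventuallyEq_set]
    filter_upwards [hSpos] with ω hω
    exact lt_div_iff₀ hω
  have hXS : IndepFun (F k0) S μ := by
    have h1 := hind.indepFun_finset {k0} s (Finset.disjoint_singleton_left.mpr hk0) hF
    have hm1 : Measurable fun v : {x // x ∈ ({k0} : Finset κ)} → ℝ =>
        v ⟨k0, Finset.mem_singleton_self k0⟩ := measurable_pi_apply _
    have hm2 : Measurable fun v : {x // x ∈ s} → ℝ => ∑ i : {x // x ∈ s}, v i * w i.1 :=
      Finset.measurable_sum _ fun i _ => (measurable_pi_apply i).mul_const _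
    have h2 := h1.comp hm1 hm2
    have hcomp : S = (fun v : {x // x ∈ s} → ℝ => ∑ i : {x // x ∈ s}, v i * w i.1) ∘
        (fun a (i : {x // x ∈ s}) => F i.1 a) := by
      funext a
      simp only [Function.comp_apply, hSdef]
      exact (Finset.sum_coe_sort s (fun i => F i a * w i)).symm
    rw [hcomp]
    exact h2
  have hpair : μ.map (fun ω => (S ω, F k0 ω)) = (μ.map S).prod (expMeasure 1) := by
    rw [← hX]
    exact (indepFun_iff_map_prod_eq_prod_map_map hSmeas.aemeasurable
      (hF k0).aemeasurable).1 hXS.symm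
  have hEmeas : MeasurableSet {p : ℝ × ℝ | c * p.1 < p.2} :=
    measurableSet_lt (measurable_fst.const_mul c) measurable_snd
  have hstep : μ {ω | c * S ω < F k0 ω}
      = (μ.map (fun ω => (S ω, F k0 ω))) {p : ℝ × ℝ | c * p.1 < p.2} := by
    rw [Measure.map_apply (hSmeas.prodMk (hF k0)) hEmeas]
    rfl
  have htailmeas : Measurable fun x : ℝ => expMeasure 1 (Set.Ioi x) := by
    apply Antitone.measurable
    intro a b hab
    exact measure_mono (Set.Ioi_subset_Ioi hab)
  rw [measure_congr hev, hstep, hpair, Measure.prod_apply hEmeas]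
  have hinner : ∀ x : ℝ, (expMeasure 1) (Prod.mk x ⁻¹' {p : ℝ × ℝ | c * p.1 < p.2})
      = expMeasure 1 (Set.Ioi (c * x)) := by
    intro x; congr 1
  rw [lintegral_congr hinner]
  rw [lintegral_map (show Measurable fun x : ℝ => expMeasure 1 (Set.Ioi (c * x)) from
    htailmeas.comp (measurable_const_mul c)) hSmeas]
  have hcongr2 : ∀ᵐ ω ∂μ, expMeasure 1 (Set.Ioi (c * S ω))
      = ENNReal.ofReal (Real.exp (-(c * S ω))) := by
    filter_upwards [hSpos] with ω hω
    exact expMeasure_Ioi (mul_nonneg hc hω.le)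
  rw [lintegral_congr_ae hcongr2]
  have hsplit : ∀ ω, ENNReal.ofReal (Real.exp (-(c * S ω)))
      = ∏ i ∈ s, ENNReal.ofReal (Real.exp (-(c * w i * F i ω))) := by
    intro ω
    rw [← ENNReal.ofReal_prod_of_nonneg (fun i _ => (Real.exp_pos _).le), ← Real.exp_sum]
    congr 2
    simp only [hSdef, Finset.mul_sum, neg_eq_iff_eq_neg, Finset.sum_neg_distrib, neg_neg]
    exact Finset.sum_congr rfl fun i hi => by ring
  rw [lintegral_congr hsplit]
  set G : κ → Ω → ℝ≥0∞ := fun i ω => ENNReal.ofReal (Real.exp (-(c * w i * F i ω))) with hGdef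
  have hGmeas : ∀ i, Measurable (G i) := by
    intro i; fun_prop
  have hGind : iIndepFun G μ :=
    hind.comp (fun i (x : ℝ) => ENNReal.ofReal (Real.exp (-(c * w i * x))))
      (fun i => by fun_prop)
  rw [lintegral_finset_prod_of_iIndepFun hGmeas hGind s]
  exact Finset.prod_congr rfl fun i hi =>
    lintegral_ofReal_exp_neg_mul (hF i) (hY i hi) (mul_nonneg hc (hw i hi).le)

lemma inv_le_K_exp {b t : ℝ} (hb : 0 < b) (ht : 0 ≤ t) :
    (1 + (Real.exp t - 1) * b)⁻¹ ≤ max 1 b⁻¹ * Real.exp (-t) := by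
  have he : (1:ℝ) ≤ Real.exp t := Real.one_le_exp ht
  set K : ℝ := max 1 b⁻¹ with hKdef
  have hK0 : 0 < K := lt_of_lt_of_le one_pos (le_max_left _ _)
  have hKinv1 : K⁻¹ ≤ 1 := by
    rw [inv_le_one_iff₀]; right; exact le_max_left _ _
  have hKinvb : K⁻¹ ≤ b := by
    calc K⁻¹ = K⁻¹ * 1 := (mul_one _).symm
      _ ≤ K⁻¹ * (K * b) := by
          apply mul_le_mul_of_nonneg_left _ (by positivity)
          calc (1:ℝ) = b⁻¹ * b := (inv_mul_cancel₀ hb.ne').symm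
            _ ≤ K * b := mul_le_mul_of_nonneg_right (le_max_right _ _) hb.le
      _ = b := by field_simp
  have key : K⁻¹ * Real.exp t ≤ 1 + (Real.exp t - 1) * b := by nlinarith
  calc (1 + (Real.exp t - 1) * b)⁻¹ ≤ (K⁻¹ * Real.exp t)⁻¹ := by
        apply inv_anti₀ _ key
        positivity
    _ = K * Real.exp (-t) := by rw [mul_inv, inv_inv, Real.exp_neg]

lemma one_add_max_mul_pos {v s0 t : ℝ} (hv : 0 < v) (hs0 : 0 ≤ s0) :
    0 < 1 + max (Real.exp t - 1) s0 * v := by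
  have h1 : 0 ≤ max (Real.exp t - 1) s0 := le_max_of_le_right hs0
  nlinarith

lemma integrableOn_prod_inv {κ : Type*} (s : Finset κ) (hs : s.Nonempty) {v : κ → ℝ}
    (hv : ∀ i ∈ s, 0 < v i) {s0 : ℝ} (hs0 : 0 ≤ s0) :
    IntegrableOn (fun t => ∏ i ∈ s, (1 + max (Real.exp t - 1) s0 * v i)⁻¹) (Set.Ioi 0) := by
  classical
  obtain ⟨i0, hi0⟩ := hs
  have hKint : IntegrableOn (fun t : ℝ => max 1 (v i0)⁻¹ * Real.exp (-t)) (Set.Ioi 0) := by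
    have h1 : IntegrableOn (fun t : ℝ => Real.exp (-t)) (Set.Ioi 0) := by
      have := exp_neg_integrableOn_Ioi (b := 1) 0 one_pos
      refine this.congr_fun (fun x _ => by ring_nf) measurableSet_Ioi
    exact h1.const_mul _
  apply Integrable.mono hKint
  · apply Continuous.aestronglyMeasurable
    apply continuous_finset_prod
    intro i hi
    apply Continuous.inv₀
    · fun_prop
    · intro t; exact (one_add_max_mul_pos (hv i hi) hs0).ne'
  · rw [ae_restrict_iff' measurableSet_Ioi]
    apply Filter.Eventually.of_forall
    intro t ht
    have hfac : ∀ i ∈ s, 0 < (1 + max (Real.exp t - 1) s0 * v i)⁻¹ ∧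
        (1 + max (Real.exp t - 1) s0 * v i)⁻¹ ≤ 1 := by
      intro i hi
      constructor
      · exact inv_pos.2 (one_add_max_mul_pos (hv i hi) hs0)
      · rw [inv_le_one_iff₀]; right
        have h1 : 0 ≤ max (Real.exp t - 1) s0 := le_max_of_le_right hs0
        nlinarith [hv i hi]
    have hprod_nonneg : 0 ≤ ∏ i ∈ s, (1 + max (Real.exp t - 1) s0 * v i)⁻¹ :=
      Finset.prod_nonneg fun i hi => (hfac i hi).1.le
    rw [Real.norm_of_nonneg hprod_nonneg, Real.norm_of_nonneg (by positivity)]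
    calc ∏ i ∈ s, (1 + max (Real.exp t - 1) s0 * v i)⁻¹
        ≤ (1 + max (Real.exp t - 1) s0 * v i0)⁻¹ := by
          rw [← Finset.prod_erase_mul s _ hi0]
          apply mul_le_of_le_one_left (hfac i0 hi0).1.le
          apply Finset.prod_le_one
          · exact fun i hi => ((hfac i (Finset.mem_of_mem_erase hi)).1).le
          · exact fun i hi => (hfac i (Finset.mem_of_mem_erase hi)).2
      _ ≤ (1 + (Real.exp t - 1) * v i0)⁻¹ := by
          apply inv_anti₀
          · have : (0:ℝ) ≤ Real.exp t - 1 := by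
              have := Real.one_le_exp (le_of_lt ht); linarith
            nlinarith [hv i0 hi0]
          · apply add_le_add le_rfl
            exact mul_le_mul_of_nonneg_right (le_max_left _ _) (hv i0 hi0).le
      _ ≤ max 1 (v i0)⁻¹ * Real.exp (-t) := inv_le_K_exp (hv i0 hi0) ht.le

lemma layercake_main [IsProbabilityMeasure μ] {κ : Type*}
    {η : Ω → ℝ} (hη : Measurable η) (hpos : ∀ᵐ ω ∂μ, 0 ≤ η ω)
    (s : Finset κ) (hs : s.Nonempty) {v : κ → ℝ} (hv : ∀ i ∈ s, 0 < v i)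
    (htail : ∀ x : ℝ, 0 ≤ x → μ {ω | x < η ω} = ∏ i ∈ s, ENNReal.ofReal ((1 + x * v i)⁻¹))
    {s0 : ℝ} (hs0 : 0 ≤ s0) :
    ∫ ω in {ω | s0 < η ω}, Real.log (1 + η ω) ∂μ
      = ∫ t in Set.Ioi (0:ℝ), ∏ i ∈ s, (1 + max (Real.exp t - 1) s0 * v i)⁻¹ := by
  classical
  set f : Ω → ℝ := Set.indicator {ω | s0 < η ω} (fun ω => Real.log (1 + η ω)) with hfdef
  have hsetmeas : MeasurableSet {ω | s0 < η ω} := measurableSet_lt measurable_const hη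
  have hfmeas : Measurable f := ((measurable_const.add hη).log).indicator hsetmeas
  have hf_nn : 0 ≤ᵐ[μ] f := by
    filter_upwards [hpos] with ω hω
    by_cases hmem : ω ∈ {ω | s0 < η ω}
    · rw [hfdef]
      simp only [Set.indicator_of_mem hmem]
      apply Real.log_nonneg; linarith
    · rw [hfdef]
      simp only [Set.indicator_of_notMem hmem, Pi.zero_apply]
      exact le_rfl
  have hmeas_t : ∀ t : ℝ, 0 < t →
      μ {a | t < f a} = ∏ i ∈ s, ENNReal.ofReal ((1 + max (Real.exp t - 1) s0 * v i)⁻¹) := by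
    intro t ht
    have hev : {a | t < f a} =ᵐ[μ] {a | max (Real.exp t - 1) s0 < η a} := by
      rw [Filter.eventuallyEq_set]
      filter_upwards [hpos] with ω hω
      by_cases hmem : ω ∈ {ω | s0 < η ω}
      · rw [hfdef]
        simp only [Set.indicator_of_mem hmem]
        have hmem' : s0 < η ω := hmem
        rw [max_lt_iff]
        constructor
        · intro hlt
          refine ⟨?_, hmem'⟩
          have := (Real.lt_log_iff_exp_lt (by linarith : (0:ℝ) < 1 + η ω)).1 hlt
          linarith
        · rintro ⟨h1, _⟩
          rw [Real.lt_log_iff_exp_lt (by linarith : (0:ℝ) < 1 + η ω)]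
          linarith
      · rw [hfdef]
        simp only [Set.indicator_of_notMem hmem]
        have hmem' : ¬ s0 < η ω := hmem
        constructor
        · intro hlt; linarith
        · intro hlt
          rw [max_lt_iff] at hlt
          exact absurd hlt.2 hmem'
    rw [measure_congr hev]
    exact htail _ (le_max_of_le_right hs0)
  have hint : Integrable f μ := by
    refine ⟨hfmeas.aestronglyMeasurable, ?_⟩
    rw [hasFiniteIntegral_iff_ofReal hf_nn]
    rw [lintegral_eq_lintegral_meas_lt μ hf_nn hfmeas.aemeasurable]
    have hcg : ∫⁻ t in Set.Ioi 0, μ {a | t < f a}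
        = ∫⁻ t in Set.Ioi 0,
            ENNReal.ofReal (∏ i ∈ s, (1 + max (Real.exp t - 1) s0 * v i)⁻¹) := by
      apply setLIntegral_congr_fun measurableSet_Ioi
      intro t ht
      dsimp only
      rw [hmeas_t t ht, ENNReal.ofReal_prod_of_nonneg]
      intro i hi
      exact (inv_pos.2 (one_add_max_mul_pos (hv i hi) hs0)).le
    rw [hcg]
    exact (integrableOn_prod_inv s hs hv hs0).lintegral_lt_top
  rw [← integral_indicator hsetmeas]
  rw [hint.integral_eq_integral_meas_lt hf_nn]
  apply setIntegral_congr_fun measurableSet_Ioi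
  intro t ht
  dsimp only
  rw [measureReal_def, hmeas_t t ht, ENNReal.toReal_prod]
  apply Finset.prod_congr rfl
  intro i hi
  rw [ENNReal.toReal_ofReal (inv_pos.2 (one_add_max_mul_pos (hv i hi) hs0)).le]

end FFRaux



open MeasureTheory ProbabilityTheory

/-- the FFR normalized average rate in the interference-limited,
uncorrelated sub-band case.  With FR1 SIR `η = g r^{-α} / ∑ i, h i * d i^{-α}`
and FR3 SIR `η̂ = ĝ r^{-α} / ∑ i ∈ φ, ĥ i * d i^{-α}`, all fadings mutually
independent unit-rate exponentials, for `T ≥ 0` and `S_th ≥ 0`,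
`R_f = E[ln(1+η)·1_{η>T}·1_{η>S_th}] + (1/3)·E[ln(1+η̂)·1_{η̂>T}·1_{η≤S_th}]`
equals
`∫_0^∞ [∏_{j}(1 + max(e^t−1,T,S_th) r^α d_j^{-α})⁻¹
 + (1/3)(1 − ∏_j (1+S_th r^α d_j^{-α})⁻¹) ∏_{i∈φ}(1 + max(e^t−1,T) r^α d_i^{-α})⁻¹] dt`. -/
theorem FFR_normalized_average_rate_uncorrelated
    {Ω : Type*} [MeasurableSpace Ω] (μ : Measure Ω) [IsProbabilityMeasure μ]
    {ι : Type*} [Fintype ι] [Nonempty ι]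
    (φ : Finset ι) (hφ : φ.Nonempty)
    (g ghat : Ω → ℝ) (h hhat : ι → Ω → ℝ)
    (hg_meas : Measurable g) (hghat_meas : Measurable ghat)
    (hh_meas : ∀ i, Measurable (h i)) (hhhat_meas : ∀ i, Measurable (hhat i))
    (hg_exp : Measure.map g μ = expMeasure 1)
    (hghat_exp : Measure.map ghat μ = expMeasure 1)
    (hh_exp : ∀ i, Measure.map (h i) μ = expMeasure 1)
    (hhhat_exp : ∀ i ∈ φ, Measure.map (hhat i) μ = expMeasure 1)
    (h_indep : iIndepFun
      (fun x : Bool ⊕ ι ⊕ {i // i ∈ φ} =>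
        Sum.elim (fun b => if b then ghat else g)
          (Sum.elim h (fun i => hhat i.1)) x) μ)
    (r α : ℝ) (hr : 0 < r) (hα : 2 ≤ α)
    (d : ι → ℝ) (hd : ∀ i, 0 < d i)
    (T Sth : ℝ) (hT : 0 ≤ T) (hSth : 0 ≤ Sth) :
    (∫ ω in {ω | T < g ω * r ^ (-α) / (∑ i, h i ω * d i ^ (-α)) ∧
                 Sth < g ω * r ^ (-α) / (∑ i, h i ω * d i ^ (-α))},
        Real.log (1 + g ω * r ^ (-α) / (∑ i, h i ω * d i ^ (-α))) ∂μ)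
      + (1/3) * ∫ ω in {ω | T < ghat ω * r ^ (-α) / (∑ i ∈ φ, hhat i ω * d i ^ (-α)) ∧
                            g ω * r ^ (-α) / (∑ i, h i ω * d i ^ (-α)) ≤ Sth},
          Real.log (1 + ghat ω * r ^ (-α) / (∑ i ∈ φ, hhat i ω * d i ^ (-α))) ∂μ
      = ∫ t in Set.Ioi (0 : ℝ),
          (∏ j, (1 + max (max (Real.exp t - 1) T) Sth * r ^ α * d j ^ (-α))⁻¹
            + (1/3) * (1 - ∏ j, (1 + Sth * r ^ α * d j ^ (-α))⁻¹)
                * ∏ i ∈ φ, (1 + max (Real.exp t - 1) T * r ^ α * d i ^ (-α))⁻¹) := by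
  classical
  -- notation
  set κ : Type _ := Bool ⊕ ι ⊕ {i // i ∈ φ} with hκdef
  set F : κ → Ω → ℝ := fun x =>
    Sum.elim (fun b => if b then ghat else g) (Sum.elim h (fun i => hhat i.1)) x with hFdef
  have hF0 : F (Sum.inl false) = g := rfl
  have hF1 : F (Sum.inl true) = ghat := rfl
  have hFmeas : ∀ x, Measurable (F x) := by
    rintro (b | i | i)
    · cases b
      · exact hg_meas
      · exact hghat_meas
    · exact hh_meas i
    · exact hhhat_meas i.1
  set w : κ → ℝ := Sum.elim (fun _ => 1)
    (Sum.elim (fun i => r ^ α * d i ^ (-α)) (fun i => r ^ α * d i.1 ^ (-α))) with hwdef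
  have hwpos : ∀ i : ι, 0 < r ^ α * d i ^ (-α) := fun i =>
    mul_pos (Real.rpow_pos_of_pos hr α) (Real.rpow_pos_of_pos (hd i) (-α))
  set sι : Finset κ := Finset.univ.image (fun i : ι => Sum.inr (Sum.inl i)) with hsιdef
  set sφ : Finset κ := φ.attach.image
    (fun i : {i // i ∈ φ} => (Sum.inr (Sum.inr i) : κ)) with hsφdef
  have hinjι : Function.Injective (fun i : ι => (Sum.inr (Sum.inl i) : κ)) := by
    intro a b hab; simpa using hab
  have hinjφ : Function.Injective (fun i : {i // i ∈ φ} => (Sum.inr (Sum.inr i) : κ)) := by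
    intro a b hab; simpa using hab
  have hsι_ne : sι.Nonempty := Finset.Nonempty.image Finset.univ_nonempty _
  have hsφ_ne : sφ.Nonempty := Finset.Nonempty.image (Finset.attach_nonempty_iff.2 hφ) _
  have hk0ι : (Sum.inl false : κ) ∉ sι := by simp [hsιdef]
  have hk0φ : (Sum.inl true : κ) ∉ sφ := by simp [hsφdef]
  have hYι : ∀ x ∈ sι, μ.map (F x) = expMeasure 1 := by
    intro x hx
    rw [hsιdef, Finset.mem_image] at hx
    obtain ⟨j, _, rfl⟩ := hx
    exact hh_exp j
  have hYφ : ∀ x ∈ sφ, μ.map (F x) = expMeasure 1 := by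
    intro x hx
    rw [hsφdef, Finset.mem_image] at hx
    obtain ⟨j, _, rfl⟩ := hx
    exact hhhat_exp j.1 j.2
  have hwι : ∀ x ∈ sι, 0 < w x := by
    intro x hx
    rw [hsιdef, Finset.mem_image] at hx
    obtain ⟨j, _, rfl⟩ := hx
    exact hwpos j
  have hwφ : ∀ x ∈ sφ, 0 < w x := by
    intro x hx
    rw [hsφdef, Finset.mem_image] at hx
    obtain ⟨j, _, rfl⟩ := hx
    exact hwpos j.1
  -- algebraic rewriting of the SIRs
  set Sg : Ω → ℝ := fun ω => ∑ i, h i ω * d i ^ (-α) with hSgdef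
  set Sh : Ω → ℝ := fun ω => ∑ i ∈ φ, hhat i ω * d i ^ (-α) with hShdef
  have hSgmeas : Measurable Sg := Finset.measurable_sum _ fun i _ => (hh_meas i).mul_const _
  have hShmeas : Measurable Sh := Finset.measurable_sum _ fun i _ => (hhhat_meas i).mul_const _
  set η1 : Ω → ℝ := fun ω => g ω * r ^ (-α) / Sg ω with hη1def
  set η2 : Ω → ℝ := fun ω => ghat ω * r ^ (-α) / Sh ω with hη2def
  have hη1meas : Measurable η1 := (hg_meas.mul_const _).div hSgmeas
  have hη2meas : Measurable η2 := (hghat_meas.mul_const _).div hShmeas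
  have hralg : ∀ a S : ℝ, a * r ^ (-α) / S = a / (r ^ α * S) := by
    intro a S
    rw [Real.rpow_neg hr.le, div_eq_mul_inv, div_eq_mul_inv, mul_inv, mul_assoc]
  have hsum1 : ∀ ω, (∑ x ∈ sι, F x ω * w x) = r ^ α * Sg ω := by
    intro ω
    rw [hsιdef, Finset.sum_image (fun a _ b _ hab => hinjι hab)]
    rw [hSgdef, Finset.mul_sum]
    exact Finset.sum_congr rfl fun i _ => by
      show h i ω * (r ^ α * d i ^ (-α)) = _
      ring
  have hsum2 : ∀ ω, (∑ x ∈ sφ, F x ω * w x) = r ^ α * Sh ω := by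
    intro ω
    rw [hsφdef, Finset.sum_image (fun a _ b _ hab => hinjφ hab)]
    rw [hShdef, Finset.mul_sum, ← Finset.sum_attach φ (fun i => r ^ α * (hhat i ω * d i ^ (-α)))]
    exact Finset.sum_congr rfl fun i _ => by
      show hhat i.1 ω * (r ^ α * d i.1 ^ (-α)) = _
      ring
  have hη1eq : ∀ ω, F (Sum.inl false) ω / (∑ x ∈ sι, F x ω * w x) = η1 ω := by
    intro ω
    rw [hsum1, hF0]
    show g ω / (r ^ α * Sg ω) = g ω * r ^ (-α) / Sg ω
    exact (hralg _ _).symm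
  have hη2eq : ∀ ω, F (Sum.inl true) ω / (∑ x ∈ sφ, F x ω * w x) = η2 ω := by
    intro ω
    rw [hsum2, hF1]
    show ghat ω / (r ^ α * Sh ω) = ghat ω * r ^ (-α) / Sh ω
    exact (hralg _ _).symm
  -- tail probabilities
  have htail1 : ∀ x : ℝ, 0 ≤ x → μ {ω | x < η1 ω}
      = ∏ j, ENNReal.ofReal ((1 + x * (r ^ α * d j ^ (-α)))⁻¹) := by
    intro x hx
    have := FFRaux.tail_prob hFmeas h_indep (Sum.inl false) sι hk0ι hg_exp hYι hwι hsι_ne hx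
    have hsets : {ω | x < F (Sum.inl false) ω / ∑ i ∈ sι, F i ω * w i} = {ω | x < η1 ω} := by
      ext ω; rw [Set.mem_setOf_eq, Set.mem_setOf_eq, hη1eq ω]
    rw [hsets] at this
    rw [this, hsιdef, Finset.prod_image (fun a _ b _ hab => hinjι hab)]
    rfl
  have htail2 : ∀ x : ℝ, 0 ≤ x → μ {ω | x < η2 ω}
      = ∏ i ∈ φ, ENNReal.ofReal ((1 + x * (r ^ α * d i ^ (-α)))⁻¹) := by
    intro x hx
    have := FFRaux.tail_prob hFmeas h_indep (Sum.inl true) sφ hk0φ hghat_exp hYφ hwφ hsφ_ne hx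
    have hsets : {ω | x < F (Sum.inl true) ω / ∑ i ∈ sφ, F i ω * w i} = {ω | x < η2 ω} := by
      ext ω; rw [Set.mem_setOf_eq, Set.mem_setOf_eq, hη2eq ω]
    rw [hsets] at this
    rw [this, hsφdef, Finset.prod_image (fun a _ b _ hab => hinjφ hab),
      ← Finset.prod_attach φ (fun i => ENNReal.ofReal ((1 + x * (r ^ α * d i ^ (-α)))⁻¹))]
    rfl
  -- a.e. nonnegativity of the SIRs
  have hSgpos : ∀ᵐ ω ∂μ, 0 < Sg ω := by
    have h1 : ∀ᵐ ω ∂μ, ∀ i : ι, 0 < h i ω :=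
      (MeasureTheory.ae_all_iff).2 fun i => FFRaux.ae_pos_of_expMap (hh_meas i) (hh_exp i)
    filter_upwards [h1] with ω hω
    exact Finset.sum_pos (fun i _ => mul_pos (hω i) (Real.rpow_pos_of_pos (hd i) _))
      Finset.univ_nonempty
  have hShpos : ∀ᵐ ω ∂μ, 0 < Sh ω := by
    have h1 : ∀ᵐ ω ∂μ, ∀ i ∈ φ, 0 < hhat i ω :=
      (MeasureTheory.ae_ball_iff φ.countable_toSet).2 fun i hi =>
        FFRaux.ae_pos_of_expMap (hhhat_meas i) (hhhat_exp i hi)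
    filter_upwards [h1] with ω hω
    exact Finset.sum_pos (fun i hi => mul_pos (hω i hi) (Real.rpow_pos_of_pos (hd i) _)) hφ
  have hη1pos : ∀ᵐ ω ∂μ, 0 ≤ η1 ω := by
    filter_upwards [FFRaux.ae_pos_of_expMap hg_meas hg_exp, hSgpos] with ω h1 h2
    exact div_nonneg (mul_nonneg h1.le (Real.rpow_pos_of_pos hr _).le) h2.le
  have hη2pos : ∀ᵐ ω ∂μ, 0 ≤ η2 ω := by
    filter_upwards [FFRaux.ae_pos_of_expMap hghat_meas hghat_exp, hShpos] with ω h1 h2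
    exact div_nonneg (mul_nonneg h1.le (Real.rpow_pos_of_pos hr _).le) h2.le
  -- Term 1
  have hterm1 : ∫ ω in {ω | T < η1 ω ∧ Sth < η1 ω}, Real.log (1 + η1 ω) ∂μ
      = ∫ t in Set.Ioi (0:ℝ),
          ∏ j, (1 + max (Real.exp t - 1) (max T Sth) * (r ^ α * d j ^ (-α)))⁻¹ := by
    have hset : {ω | T < η1 ω ∧ Sth < η1 ω} = {ω | max T Sth < η1 ω} := by
      ext ω; simp [max_lt_iff]
    rw [hset]
    exact FFRaux.layercake_main hη1meas hη1pos Finset.univ Finset.univ_nonempty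
      (fun i _ => hwpos i) (fun x hx => htail1 x hx) (le_max_of_le_left hT)
  -- Term 2 inner
  have hterm2b : ∫ ω in {ω | T < η2 ω}, Real.log (1 + η2 ω) ∂μ
      = ∫ t in Set.Ioi (0:ℝ),
          ∏ i ∈ φ, (1 + max (Real.exp t - 1) T * (r ^ α * d i ^ (-α)))⁻¹ :=
    FFRaux.layercake_main hη2meas hη2pos φ hφ (fun i _ => hwpos i)
      (fun x hx => htail2 x hx) hT
  -- Term 2 split into independent product
  set B : Set Ω := {ω | η1 ω ≤ Sth} with hBdef
  set A : Set Ω := {ω | T < η2 ω} with hAdef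
  have hBmeas : MeasurableSet B := measurableSet_le hη1meas measurable_const
  have hAmeas : MeasurableSet A := measurableSet_lt measurable_const hη2meas
  set X1 : Ω → ℝ := Set.indicator B (fun _ => (1:ℝ)) with hX1def
  set X2 : Ω → ℝ := Set.indicator A (fun ω => Real.log (1 + η2 ω)) with hX2def
  have hX1meas : Measurable X1 := measurable_const.indicator hBmeas
  have hX2meas : Measurable X2 := ((measurable_const.add hη2meas).log).indicator hAmeas
  set sG : Finset κ := insert (Sum.inl false) sι with hsGdef
  set sH : Finset κ := insert (Sum.inl true) sφ with hsHdef
  have hdisj : Disjoint sG sH := by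
    rw [Finset.disjoint_left]
    intro a ha hb
    rw [hsGdef, Finset.mem_insert, hsιdef, Finset.mem_image] at ha
    rw [hsHdef, Finset.mem_insert, hsφdef, Finset.mem_image] at hb
    rcases ha with rfl | ⟨i, _, rfl⟩
    · rcases hb with hb | ⟨j, _, hb⟩
      · exact Bool.noConfusion (Sum.inl.inj hb)
      · exact absurd hb (by simp)
    · rcases hb with hb | ⟨j, _, hb⟩
      · exact absurd hb (by simp)
      · exact absurd hb (by intro h; injection h with h; injection h)
  have hbase := h_indep.indepFun_finset sG sH hdisj hFmeas
  have hmemG0 : (Sum.inl false : κ) ∈ sG := Finset.mem_insert_self _ _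
  have hmemGi : ∀ i : ι, (Sum.inr (Sum.inl i) : κ) ∈ sG := fun i =>
    Finset.mem_insert_of_mem (by rw [hsιdef]; exact Finset.mem_image_of_mem _ (Finset.mem_univ i))
  have hmemH0 : (Sum.inl true : κ) ∈ sH := Finset.mem_insert_self _ _
  have hmemHi : ∀ i : {i // i ∈ φ}, (Sum.inr (Sum.inr i) : κ) ∈ sH := fun i =>
    Finset.mem_insert_of_mem
      (by rw [hsφdef]; exact Finset.mem_image_of_mem _ (Finset.mem_attach φ i))
  set P : Ω → ℝ × (ι → ℝ) := fun ω => (F (Sum.inl false) ω, fun i => F (Sum.inr (Sum.inl i)) ω)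
    with hPdef
  set Q : Ω → ℝ × ({i // i ∈ φ} → ℝ) :=
    fun ω => (F (Sum.inl true) ω, fun i => F (Sum.inr (Sum.inr i)) ω) with hQdef
  have hPQ : IndepFun P Q μ := by
    have hpG : Measurable fun v : {x // x ∈ sG} → ℝ =>
        ((v ⟨Sum.inl false, hmemG0⟩, fun i : ι => v ⟨Sum.inr (Sum.inl i), hmemGi i⟩) :
          ℝ × (ι → ℝ)) :=
      (measurable_pi_apply _).prodMk (measurable_pi_lambda _ fun i => measurable_pi_apply _)
    have hpH : Measurable fun v : {x // x ∈ sH} → ℝ =>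
        ((v ⟨Sum.inl true, hmemH0⟩, fun i : {i // i ∈ φ} => v ⟨Sum.inr (Sum.inr i), hmemHi i⟩) :
          ℝ × ({i // i ∈ φ} → ℝ)) :=
      (measurable_pi_apply _).prodMk (measurable_pi_lambda _ fun i => measurable_pi_apply _)
    exact hbase.comp hpG hpH
  set f1 : ℝ × (ι → ℝ) → ℝ := fun p =>
    Set.indicator {p : ℝ × (ι → ℝ) | p.1 * r ^ (-α) / (∑ i, p.2 i * d i ^ (-α)) ≤ Sth}
      (fun _ => (1:ℝ)) p with hf1def
  set f2 : ℝ × ({i // i ∈ φ} → ℝ) → ℝ := fun p =>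
    Set.indicator {p : ℝ × ({i // i ∈ φ} → ℝ) |
        T < p.1 * r ^ (-α) / (∑ i ∈ φ.attach, p.2 i * d i.1 ^ (-α))}
      (fun p => Real.log (1 + p.1 * r ^ (-α) / (∑ i ∈ φ.attach, p.2 i * d i.1 ^ (-α)))) p
    with hf2def
  have hf1meas : Measurable f1 := by
    apply Measurable.indicator measurable_const
    apply measurableSet_le _ measurable_const
    exact (measurable_fst.mul_const _).div
      (Finset.measurable_sum _ fun i _ =>
        ((measurable_pi_apply i).comp measurable_snd).mul_const _)
  have hsumQmeas : Measurable fun p : ℝ × ({i // i ∈ φ} → ℝ) =>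
      p.1 * r ^ (-α) / (∑ i ∈ φ.attach, p.2 i * d i.1 ^ (-α)) :=
    (measurable_fst.mul_const _).div
      (Finset.measurable_sum _ fun i _ =>
        ((measurable_pi_apply i).comp measurable_snd).mul_const _)
  have hf2meas : Measurable f2 := by
    apply Measurable.indicator
    · exact (measurable_const.add hsumQmeas).log
    · exact measurableSet_lt measurable_const hsumQmeas
  have hX1comp : X1 = f1 ∘ P := rfl
  have hX2comp : X2 = f2 ∘ Q := by
    funext ω
    have hsum' : (∑ i ∈ φ.attach, F (Sum.inr (Sum.inr i)) ω * d i.1 ^ (-α)) = Sh ω :=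
      Finset.sum_attach φ (fun i => hhat i ω * d i ^ (-α))
    simp only [hX2def, hf2def, Function.comp_apply, Set.indicator_apply, Set.mem_setOf_eq,
      hQdef, hAdef]
    simp only [hsum']
    rfl
  have hindepX : IndepFun X1 X2 μ := by
    rw [hX1comp, hX2comp]
    exact hPQ.comp hf1meas hf2meas
  have hE2 : {ω | T < η2 ω ∧ η1 ω ≤ Sth} = A ∩ B := by
    ext ω
    simp only [Set.mem_setOf_eq, Set.mem_inter_iff, hAdef, hBdef]
  have hprodeq : ∀ ω, Set.indicator (A ∩ B) (fun ω => Real.log (1 + η2 ω)) ω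
      = X1 ω * X2 ω := by
    intro ω
    by_cases hA : ω ∈ A <;> by_cases hB : ω ∈ B <;>
      simp [hX1def, hX2def, Set.indicator_apply, hA, hB, Set.mem_inter_iff]
  have hterm2a : ∫ ω in {ω | T < η2 ω ∧ η1 ω ≤ Sth}, Real.log (1 + η2 ω) ∂μ
      = (∫ ω, X1 ω ∂μ) * ∫ ω, X2 ω ∂μ := by
    rw [hE2, ← integral_indicator (hAmeas.inter hBmeas)]
    rw [show (fun ω => Set.indicator (A ∩ B) (fun ω => Real.log (1 + η2 ω)) ω)
      = fun ω => X1 ω * X2 ω from funext hprodeq]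
    exact hindepX.integral_mul_eq_mul_integral hX1meas.aestronglyMeasurable hX2meas.aestronglyMeasurable
  have hintX1 : ∫ ω, X1 ω ∂μ = (μ B).toReal := by
    rw [hX1def, integral_indicator hBmeas]
    simp [measureReal_def]
  have hintX2 : ∫ ω, X2 ω ∂μ = ∫ t in Set.Ioi (0:ℝ),
      ∏ i ∈ φ, (1 + max (Real.exp t - 1) T * (r ^ α * d i ^ (-α)))⁻¹ := by
    rw [hX2def, integral_indicator hAmeas]
    exact hterm2b
  have hμB : (μ B).toReal = 1 - ∏ j, (1 + Sth * (r ^ α * d j ^ (-α)))⁻¹ := by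
    have hBc : B = {ω | Sth < η1 ω}ᶜ := by
      ext ω; simp [hBdef, not_lt]
    have hP := htail1 Sth hSth
    have hle : μ {ω | Sth < η1 ω} ≤ 1 := prob_le_one
    rw [hBc, measure_compl (measurableSet_lt measurable_const hη1meas) (measure_ne_top _ _),
      measure_univ, hP]
    rw [ENNReal.toReal_sub_of_le (hP ▸ hle) ENNReal.one_ne_top, ENNReal.toReal_one,
      ENNReal.toReal_prod]
    congr 1
    apply Finset.prod_congr rfl
    intro j _
    apply ENNReal.toReal_ofReal
    have := mul_nonneg hSth (hwpos j).le
    have h1 : (0:ℝ) < 1 + Sth * (r ^ α * d j ^ (-α)) := by linarith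
    positivity
  -- integrability of the t-integrands
  have hAint : IntegrableOn
      (fun t => ∏ j, (1 + max (Real.exp t - 1) (max T Sth) * (r ^ α * d j ^ (-α)))⁻¹)
      (Set.Ioi (0:ℝ)) :=
    FFRaux.integrableOn_prod_inv Finset.univ Finset.univ_nonempty (fun i _ => hwpos i)
      (le_max_of_le_left hT)
  have hBint : IntegrableOn
      (fun t => ∏ i ∈ φ, (1 + max (Real.exp t - 1) T * (r ^ α * d i ^ (-α)))⁻¹)
      (Set.Ioi (0:ℝ)) :=
    FFRaux.integrableOn_prod_inv φ hφ (fun i _ => hwpos i) hT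
  -- assemble
  show (∫ ω in {ω | T < η1 ω ∧ Sth < η1 ω}, Real.log (1 + η1 ω) ∂μ)
      + (1/3) * ∫ ω in {ω | T < η2 ω ∧ η1 ω ≤ Sth}, Real.log (1 + η2 ω) ∂μ
      = ∫ t in Set.Ioi (0 : ℝ),
          (∏ j, (1 + max (max (Real.exp t - 1) T) Sth * r ^ α * d j ^ (-α))⁻¹
            + (1/3) * (1 - ∏ j, (1 + Sth * r ^ α * d j ^ (-α))⁻¹)
                * ∏ i ∈ φ, (1 + max (Real.exp t - 1) T * r ^ α * d i ^ (-α))⁻¹)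
  simp only [max_assoc, mul_assoc]
  rw [hterm1, hterm2a, hintX1, hintX2, hμB]
  rw [integral_add hAint (((hBint.const_mul _).const_mul _))]
  rw [integral_const_mul, integral_const_mul]
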